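/- Fix a ∈ ℝ and δ ∈ (0,π/2), and let T = { λ ∈ ℂ : π/2 − δ/2 ≤ arg λ ≤ π/2 + δ/2 }. Let f : ℂ₊ → ℂ be analytic with Im f(λ) ≥ 0 for all λ ∈ ℂ₊. Assume that f(λ) − λ + a/(2λ) = O(|λ|^{−2}) as |λ| → ∞ along each of the two rays arg λ = π/2 − δ/2 and arg λ = π/2 + δ/2, and that f(λ) = O(|λ|^{−1}) as λ → 0 with λ ∈ T. Then f(λ) − λ + a/(2λ) = O(|λ|^{−2}) as |λ| → ∞ with λ ∈ T. -/

import Mathlib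

open MeasureTheory

open Metric Set Complex


lemma bc_step (h : ℂ → ℂ) (c z : ℂ) (R r : ℝ) (hr0 : 0 ≤ r) (hrR : r < R)
    (hd : DifferentiableOn ℂ h (ball c R))
    (hre : ∀ w ∈ ball c R, 0 ≤ (h w).re)
    (hz : dist z c ≤ r) :
    ‖h z‖ ≤ (R + r) / (R - r) * (‖h c‖ + 2) := by
  have hR : 0 < R := lt_of_le_of_lt hr0 hrR
  have hzball : z ∈ ball c R := lt_of_le_of_lt hz hrR
  have hcball : c ∈ ball c R := mem_ball_self hR
  set H : ℂ → ℂ := fun w => h w + 1 with hH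
  set w₀ : ℂ := H c with hw₀
  have hre1 : ∀ w ∈ ball c R, 1 ≤ (H w).re := by
    intro w hw
    simp only [hH, Complex.add_re, Complex.one_re]
    linarith [hre w hw]
  have hw₀re : 1 ≤ w₀.re := hre1 c hcball
  have hden : ∀ w ∈ ball c R, H w + (starRingEnd ℂ) w₀ ≠ 0 := by
    intro w hw hw0
    have h1 := hre1 w hw
    have : (H w + (starRingEnd ℂ) w₀).re = (H w).re + w₀.re := by
      simp [Complex.add_re, Complex.conj_re]
    rw [hw0] at this
    simp at this
    linarith
  set g : ℂ → ℂ := fun w => (H w - w₀) / (H w + (starRingEnd ℂ) w₀) with hg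
  have hgd : DifferentiableOn ℂ g (ball c R) := by
    apply DifferentiableOn.div
    · exact (hd.add_const 1).sub_const w₀
    · exact ((hd.add_const 1).add_const _)
    · exact hden
  have hgc : g c = 0 := by simp [hg, hw₀]
  have hnum_lt : ∀ w ∈ ball c R, ‖H w - w₀‖ < ‖H w + (starRingEnd ℂ) w₀‖ := by
    intro w hw
    have h1 := hre1 w hw
    have h2 := hw₀re
    have hsq : Complex.normSq (H w - w₀) < Complex.normSq (H w + (starRingEnd ℂ) w₀) := by
      simp only [Complex.normSq_apply, Complex.sub_re, Complex.sub_im, Complex.add_re,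
        Complex.add_im, Complex.conj_re, Complex.conj_im]
      nlinarith [h1, h2]
    have h3 := Real.sqrt_lt_sqrt (Complex.normSq_nonneg _) hsq
    simpa [Complex.norm_def] using h3
  have hmaps : Set.MapsTo g (ball c R) (ball (g c) 1) := by
    intro w hw
    rw [hgc, mem_ball, dist_zero_right, hg]
    simp only
    rw [norm_div]
    have hD : 0 < ‖H w + (starRingEnd ℂ) w₀‖ := norm_pos_iff.mpr (hden w hw)
    rw [div_lt_one hD]
    exact hnum_lt w hw
  have hS := Complex.dist_le_div_mul_dist_of_mapsTo_ball hgd (hmaps.mono_right ball_subset_closedBall) hzball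
  rw [hgc, dist_zero_right] at hS
  have hgz : ‖g z‖ ≤ r / R := by
    calc ‖g z‖ ≤ 1 / R * dist z c := hS
    _ ≤ 1 / R * r := by gcongr
    _ = r / R := by ring
  -- unfold it
  have hDz : H z + (starRingEnd ℂ) w₀ ≠ 0 := hden z hzball
  have hnum_eq : ‖H z - w₀‖ = ‖g z‖ * ‖H z + (starRingEnd ℂ) w₀‖ := by
    rw [hg]; simp only; rw [norm_div, div_mul_cancel₀]
    exact norm_ne_zero_iff.mpr hDz
  have hXW : ‖H z‖ - ‖w₀‖ ≤ ‖H z - w₀‖ := by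
    have := norm_sub_norm_le (H z) w₀; linarith
  have hDle : ‖H z + (starRingEnd ℂ) w₀‖ ≤ ‖H z‖ + ‖w₀‖ := by
    calc ‖H z + (starRingEnd ℂ) w₀‖ ≤ ‖H z‖ + ‖(starRingEnd ℂ) w₀‖ := norm_add_le _ _
    _ = ‖H z‖ + ‖w₀‖ := by rw [RCLike.norm_conj]
  have hkey : ‖H z‖ ≤ (R + r) / (R - r) * ‖w₀‖ := by
    rw [div_mul_eq_mul_div, le_div_iff₀ (by linarith : (0:ℝ) < R - r)]
    have h1 : ‖H z‖ - ‖w₀‖ ≤ r / R * (‖H z‖ + ‖w₀‖) := by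
      calc ‖H z‖ - ‖w₀‖ ≤ ‖H z - w₀‖ := hXW
      _ = ‖g z‖ * ‖H z + (starRingEnd ℂ) w₀‖ := hnum_eq
      _ ≤ r / R * (‖H z‖ + ‖w₀‖) := by
          apply mul_le_mul hgz hDle (norm_nonneg _) (by positivity)
    have h2 : (‖H z‖ - ‖w₀‖) * R ≤ r * (‖H z‖ + ‖w₀‖) := by
      have h3 := mul_le_mul_of_nonneg_right h1 hR.le
      have h4 : r / R * (‖H z‖ + ‖w₀‖) * R = r * (‖H z‖ + ‖w₀‖) := by
        field_simp
      linarith [h3, h4.le, h4.ge]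

    nlinarith [norm_nonneg (H z), norm_nonneg w₀]
  have hK1 : (1:ℝ) ≤ (R + r) / (R - r) := by
    rw [le_div_iff₀ (by linarith)]; linarith
  have hhz : ‖h z‖ ≤ ‖H z‖ + 1 := by
    have : h z = H z - 1 := by simp [hH]
    rw [this]
    calc ‖H z - 1‖ ≤ ‖H z‖ + ‖(1:ℂ)‖ := norm_sub_le _ _
    _ = ‖H z‖ + 1 := by simp
  have hw₀le : ‖w₀‖ ≤ ‖h c‖ + 1 := by
    calc ‖w₀‖ = ‖h c + 1‖ := by rw [hw₀]
    _ ≤ ‖h c‖ + ‖(1:ℂ)‖ := norm_add_le _ _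
    _ = ‖h c‖ + 1 := by simp
  calc ‖h z‖ ≤ ‖H z‖ + 1 := hhz
  _ ≤ (R + r) / (R - r) * ‖w₀‖ + 1 := by linarith
  _ ≤ (R + r) / (R - r) * (‖h c‖ + 1) + (R + r) / (R - r) * 1 := by
      have := mul_le_mul_of_nonneg_left hw₀le (le_trans zero_le_one hK1)
      linarith
  _ = (R + r) / (R - r) * (‖h c‖ + 2) := by ring

/-- chord length bound: `‖e^{iθ} - 1‖ ≤ |θ|` -/
lemma chord_le (θ : ℝ) : ‖Complex.exp ((θ:ℂ) * Complex.I) - 1‖ ≤ |θ| := by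
  have hsq : Complex.normSq (Complex.exp ((θ:ℂ) * Complex.I) - 1) ≤ θ ^ 2 := by
    have h1 : (Complex.exp ((θ:ℂ) * Complex.I) - 1).re = Real.cos θ - 1 := by
      simp [Complex.sub_re, Complex.exp_ofReal_mul_I_re]
    have h2 : (Complex.exp ((θ:ℂ) * Complex.I) - 1).im = Real.sin θ := by
      simp [Complex.sub_im, Complex.exp_ofReal_mul_I_im]
    rw [Complex.normSq_apply, h1, h2]
    have hc := Real.one_sub_sq_div_two_le_cos (x := θ)
    nlinarith [Real.sin_sq_add_cos_sq θ, Real.cos_le_one θ]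
  have := Real.sqrt_le_sqrt hsq
  rw [Real.sqrt_sq_eq_abs] at this
  calc ‖Complex.exp ((θ:ℂ) * Complex.I) - 1‖
      = Real.sqrt (Complex.normSq (Complex.exp ((θ:ℂ) * Complex.I) - 1)) := by
        rw [Complex.norm_def]
  _ ≤ |θ| := this

/-- sin is at least √2/2 on [π/4, 3π/4] -/
lemma sin_ge_sqrt2 {α : ℝ} (h1 : Real.pi / 4 ≤ α) (h2 : α ≤ 3 * Real.pi / 4) :
    Real.sqrt 2 / 2 ≤ Real.sin α := by
  have : Real.sin α = Real.cos (Real.pi / 2 - α) := (Real.cos_pi_div_two_sub α).symm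
  rw [this, ← Real.cos_abs]
  have habs : |Real.pi / 2 - α| ≤ Real.pi / 4 := by
    rw [abs_le]; constructor <;> linarith
  have := Real.cos_le_cos_of_nonneg_of_le_pi (abs_nonneg _)
    (by linarith [Real.pi_pos] : Real.pi / 4 ≤ Real.pi) habs
  rwa [Real.cos_pi_div_four] at this

lemma sector_step (h : ℂ → ℂ) (hd : DifferentiableOn ℂ h {z : ℂ | 0 < z.im})
    (hre : ∀ z : ℂ, 0 < z.im → 0 ≤ (h z).re)
    (ρ α β : ℝ) (hρ : 0 < ρ) (hα1 : Real.pi / 4 ≤ α) (hα2 : α ≤ 3 * Real.pi / 4)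
    (hβα : |β - α| ≤ Real.pi / 8) :
    ‖h ((ρ:ℂ) * Complex.exp ((β:ℂ) * Complex.I))‖ ≤
      11 / 3 * (‖h ((ρ:ℂ) * Complex.exp ((α:ℂ) * Complex.I))‖ + 2) := by
  set c : ℂ := (ρ:ℂ) * Complex.exp ((α:ℂ) * Complex.I) with hc
  set z : ℂ := (ρ:ℂ) * Complex.exp ((β:ℂ) * Complex.I) with hz
  have hsqrt2 : (7:ℝ)/10 < Real.sqrt 2 / 2 := by
    nlinarith [Real.sq_sqrt (by norm_num : (2:ℝ) ≥ 0), Real.sqrt_nonneg 2]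
  have hcim : c.im = ρ * Real.sin α := by
    rw [hc, Complex.mul_im]
    simp [Complex.exp_ofReal_mul_I_im, Complex.exp_ofReal_mul_I_re]
  have hsin : Real.sqrt 2 / 2 ≤ Real.sin α := sin_ge_sqrt2 hα1 hα2
  have hball : ball c ((7:ℝ)/10 * ρ) ⊆ {z : ℂ | 0 < z.im} := by
    intro w hw
    have h1 : |w.im - c.im| ≤ ‖w - c‖ := by
      have := Complex.abs_im_le_norm (w - c)
      simpa [Complex.sub_im] using this
    have h2 : ‖w - c‖ < 7/10 * ρ := by rwa [mem_ball, dist_eq_norm] at hw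
    have h3 : c.im - 7/10 * ρ < w.im := by
      have := abs_le.mp h1
      linarith [this.1]
    simp only [Set.mem_setOf_eq]
    have : (7:ℝ)/10 * ρ < Real.sqrt 2 / 2 * ρ := by nlinarith
    nlinarith [hcim, mul_le_mul_of_nonneg_left hsin hρ.le]
  have hdist : dist z c ≤ (2:ℝ)/5 * ρ := by
    have hfac : z - c = c * (Complex.exp (((β - α : ℝ):ℂ) * Complex.I) - 1) := by
      have hsplit : Complex.exp ((β:ℂ) * Complex.I) =
          Complex.exp ((α:ℂ) * Complex.I) * Complex.exp (((β - α : ℝ):ℂ) * Complex.I) := by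
        rw [← Complex.exp_add]; congr 1; push_cast; ring
      rw [hz, hc, hsplit]; ring
    rw [dist_eq_norm, hfac, norm_mul]
    have hnc : ‖c‖ = ρ := by
      rw [hc, norm_mul, Complex.norm_real,
        Complex.norm_exp_ofReal_mul_I, Real.norm_eq_abs, abs_of_pos hρ, mul_one]
    rw [hnc]
    have := chord_le (β - α)
    have hpi : Real.pi < 3.15 := Real.pi_lt_d2
    have : ‖Complex.exp (((β - α : ℝ):ℂ) * Complex.I) - 1‖ ≤ 2/5 := by
      calc ‖Complex.exp (((β - α : ℝ):ℂ) * Complex.I) - 1‖ ≤ |β - α| := chord_le _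
      _ ≤ Real.pi / 8 := hβα
      _ ≤ 2/5 := by linarith
    calc ρ * ‖Complex.exp (((β - α : ℝ):ℂ) * Complex.I) - 1‖ ≤ ρ * (2/5) := by
          exact mul_le_mul_of_nonneg_left this hρ.le
    _ = 2/5 * ρ := by ring
  have hbc := bc_step h c z ((7:ℝ)/10 * ρ) ((2:ℝ)/5 * ρ) (by positivity)
    (by nlinarith) (hd.mono hball) (fun w hw => hre w (hball hw)) hdist
  have hK : ((7:ℝ)/10 * ρ + 2/5 * ρ) / (7/10 * ρ - 2/5 * ρ) = 11/3 := by
    have hd0 : (0:ℝ) < 7/10 * ρ - 2/5 * ρ := by nlinarith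
    have heq : (7:ℝ)/10 * ρ + 2/5 * ρ = 11/3 * (7/10 * ρ - 2/5 * ρ) := by ring
    rw [heq, mul_div_assoc, div_self hd0.ne', mul_one]
  rwa [hK] at hbc
lemma sector_chain (h : ℂ → ℂ) (hd : DifferentiableOn ℂ h {z : ℂ | 0 < z.im})
    (hre : ∀ z : ℂ, 0 < z.im → 0 ≤ (h z).re) (δ ρ θ : ℝ)
    (hδ : δ ∈ Set.Ioo 0 (Real.pi / 2)) (hρ : 0 < ρ)
    (hθ : θ ∈ Set.Icc (Real.pi / 2 - δ / 2) (Real.pi / 2 + δ / 2)) :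
    ‖h ((ρ:ℂ) * Complex.exp ((θ:ℂ) * Complex.I))‖ ≤
      500 * (‖h ((ρ:ℂ) * Complex.exp ((↑(Real.pi / 2 - δ / 2):ℂ) * Complex.I))‖ + 2) := by
  obtain ⟨hδ0, hδπ⟩ := hδ
  obtain ⟨hθ1, hθ2⟩ := hθ
  have hπ := Real.pi_pos
  set α₀ : ℝ := Real.pi / 2 - δ / 2 with hα₀
  set d : ℝ := (θ - α₀) / 4 with hdd
  clear_value α₀ d
  have hd0 : 0 ≤ d := by simp only [hdd]; linarith
  have hd8 : d ≤ Real.pi / 8 := by simp only [hdd, hα₀]; linarith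
  have hmem : ∀ k : ℝ, 0 ≤ k → k ≤ 4 →
      Real.pi / 4 ≤ α₀ + k * d ∧ α₀ + k * d ≤ 3 * Real.pi / 4 := by
    intro k hk0 hk4
    constructor
    · have : 0 ≤ k * d := mul_nonneg hk0 hd0
      simp only [hα₀]; nlinarith
    · have h4 : α₀ + k * d ≤ α₀ + 4 * d := by nlinarith
      have : α₀ + 4 * d = θ := by simp only [hdd]; ring
      rw [this] at h4
      linarith
  have hstep : ∀ k : ℝ, 0 ≤ k → k ≤ 3 →
      ‖h ((ρ:ℂ) * Complex.exp ((↑(α₀ + (k+1) * d):ℂ) * Complex.I))‖ ≤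
        11 / 3 * (‖h ((ρ:ℂ) * Complex.exp ((↑(α₀ + k * d):ℂ) * Complex.I))‖ + 2) := by
    intro k hk0 hk3
    apply sector_step h hd hre ρ _ _ hρ (hmem k hk0 (by linarith)).1
      (hmem k hk0 (by linarith)).2
    have : α₀ + (k+1) * d - (α₀ + k * d) = d := by ring
    rw [this, _root_.abs_of_nonneg hd0]
    exact hd8
  have e0 : α₀ + 0 * d = α₀ := by ring
  have e4 : α₀ + 4 * d = θ := by simp only [hdd]; ring
  have s1 := hstep 0 le_rfl (by norm_num)
  have s2 := hstep 1 (by norm_num) (by norm_num)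
  have s3 := hstep 2 (by norm_num) (by norm_num)
  have s4 := hstep 3 (by norm_num) (by norm_num)
  rw [show α₀ + (0+1) * d = α₀ + 1 * d by ring, e0] at s1
  rw [show α₀ + (1+1) * d = α₀ + 2 * d by ring] at s2
  rw [show α₀ + (2+1) * d = α₀ + 3 * d by ring] at s3
  rw [show α₀ + (3+1) * d = θ by rw [hdd]; ring] at s4
  have hn := norm_nonneg (h ((ρ:ℂ) * Complex.exp ((↑α₀:ℂ) * Complex.I)))
  linarith

lemma polar_norm (ρ θ : ℝ) (hρ : 0 ≤ ρ) : ‖(ρ:ℂ) * Complex.exp ((θ:ℂ) * Complex.I)‖ = ρ := by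
  rw [norm_mul, Complex.norm_real, Complex.norm_exp_ofReal_mul_I,
    Real.norm_eq_abs, _root_.abs_of_nonneg hρ, mul_one]

lemma polar_arg (ρ θ : ℝ) (hρ : 0 < ρ) (hθ : θ ∈ Set.Ioc (-Real.pi) Real.pi) :
    Complex.arg ((ρ:ℂ) * Complex.exp ((θ:ℂ) * Complex.I)) = θ := by
  rw [Complex.arg_real_mul _ hρ, Complex.exp_mul_I, Complex.arg_cos_add_sin_mul_I hθ]

lemma polar_im (ρ θ : ℝ) : ((ρ:ℂ) * Complex.exp ((θ:ℂ) * Complex.I)).im = ρ * Real.sin θ := by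
  rw [Complex.mul_im]
  simp [Complex.exp_ofReal_mul_I_im, Complex.exp_ofReal_mul_I_re]

lemma i_exp_eq (w : ℂ) : Complex.I * Complex.exp w =
    ((Real.exp w.re : ℝ):ℂ) * Complex.exp ((↑(Real.pi / 2 + w.im):ℂ) * Complex.I) := by
  have h1 : Complex.exp ((↑(Real.pi / 2):ℂ) * Complex.I) = Complex.I := by
    rw [Complex.exp_mul_I, ← Complex.ofReal_cos, ← Complex.ofReal_sin]
    simp [Real.cos_pi_div_two, Real.sin_pi_div_two]
  have h2 : w = (↑w.re : ℂ) + (↑w.im) * Complex.I := (Complex.re_add_im w).symm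
  rw [show ((↑(Real.pi / 2 + w.im):ℂ) * Complex.I) =
      (↑(Real.pi / 2):ℂ) * Complex.I + (↑w.im:ℂ) * Complex.I by push_cast; ring,
    Complex.exp_add, h1]
  nth_rewrite 1 [h2]
  rw [Complex.exp_add, ← Complex.ofReal_exp]
  ring

set_option maxHeartbeats 2000000 in
/-- Phragmén–Lindelöf step: let `T` be the sector
`{λ : arg λ ∈ [π/2 − δ/2, π/2 + δ/2]}` and `f` Herglotz. If
`f(λ) − λ + a/(2λ) = O(|λ|⁻²)` along the two bounding rays of `T` and `f(λ) = O(|λ|⁻¹)`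
as `λ → 0` in `T`, then `f(λ) − λ + a/(2λ) = O(|λ|⁻²)` as `λ → ∞` in `T`. -/
theorem phragmen_lindelof_sector (a : ℝ) (δ : ℝ) (hδ : δ ∈ Set.Ioo 0 (Real.pi / 2))
    (f : ℂ → ℂ)
    (hf : DifferentiableOn ℂ f {z : ℂ | 0 < z.im})
    (hherg : ∀ z : ℂ, 0 < z.im → 0 ≤ (f z).im)
    (hrays : ∃ C₁ R₁ : ℝ, 0 < R₁ ∧ ∀ r θ : ℝ, R₁ ≤ r →
      (θ = Real.pi / 2 - δ / 2 ∨ θ = Real.pi / 2 + δ / 2) →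
      ‖f ((r : ℂ) * Complex.exp ((θ : ℂ) * Complex.I)) -
          (r : ℂ) * Complex.exp ((θ : ℂ) * Complex.I) +
          (a : ℂ) / (2 * ((r : ℂ) * Complex.exp ((θ : ℂ) * Complex.I)))‖ ≤ C₁ / r ^ 2)
    (h0 : ∃ C₂ r₀ : ℝ, 0 < r₀ ∧ ∀ z : ℂ,
      Complex.arg z ∈ Set.Icc (Real.pi / 2 - δ / 2) (Real.pi / 2 + δ / 2) →
      ‖z‖ ≤ r₀ → ‖f z‖ ≤ C₂ / ‖z‖) :
    ∃ C R : ℝ, 0 < R ∧ ∀ z : ℂ,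
      Complex.arg z ∈ Set.Icc (Real.pi / 2 - δ / 2) (Real.pi / 2 + δ / 2) →
      R ≤ ‖z‖ → ‖f z - z + (a : ℂ) / (2 * z)‖ ≤ C / ‖z‖ ^ 2 := by
  obtain ⟨hδ0, hδπ⟩ := hδ
  have hπ := Real.pi_pos
  obtain ⟨C₁, R₁, hR₁, hray⟩ := hrays
  obtain ⟨C₂, r₀, hr₀, h00⟩ := h0
  set g : ℂ → ℂ := fun z => z^2 * f z - z^3 + ((a:ℂ)/2) * z with hgdef
  -- algebraic identity
  have hg_eq : ∀ z : ℂ, z ≠ 0 → g z = z^2 * (f z - z + (a:ℂ)/(2*z)) := by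
    intro z hz
    simp only [hgdef]
    field_simp
  have hgnorm : ∀ z : ℂ, z ≠ 0 →
      ‖f z - z + (a:ℂ)/(2*z)‖ = ‖g z‖ / ‖z‖^2 := by
    intro z hz
    rw [hg_eq z hz, norm_mul, norm_pow, mul_comm (‖z‖^2) _, mul_div_assoc,
      div_self (pow_ne_zero 2 (norm_ne_zero_iff.mpr hz)), mul_one]
  have hgdiff : DifferentiableOn ℂ g {z : ℂ | 0 < z.im} := by
    apply DifferentiableOn.add
    apply DifferentiableOn.sub
    · exact DifferentiableOn.mul (differentiable_pow 2).differentiableOn hf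
    · exact (differentiable_pow 3).differentiableOn
    · exact ((differentiable_id.const_mul _)).differentiableOn
  -- basic sector angle facts
  have hang : ∀ θ : ℝ, θ ∈ Set.Icc (Real.pi/2 - δ/2) (Real.pi/2 + δ/2) →
      0 < θ ∧ θ < Real.pi ∧ θ ∈ Set.Ioc (-Real.pi) Real.pi := by
    intro θ ⟨h1, h2⟩
    refine ⟨by linarith, by linarith, ⟨by linarith, by linarith⟩⟩
  -- nonnegativity of the constants
  have hC₂0 : 0 ≤ C₂ := by
    have harg : Complex.arg ((↑(r₀/2):ℂ) * Complex.I) = Real.pi/2 := by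
      rw [Complex.arg_real_mul _ (by linarith : 0 < r₀/2), Complex.arg_I]
    have hn : ‖(↑(r₀/2):ℂ) * Complex.I‖ = r₀/2 := by
      rw [norm_mul, Complex.norm_real, Real.norm_eq_abs,
        Complex.norm_I, _root_.abs_of_nonneg (by linarith), mul_one]
    have := h00 ((↑(r₀/2):ℂ) * Complex.I) (by rw [harg]; constructor <;> linarith)
      (by rw [hn]; linarith)
    rw [hn] at this
    have h2 := le_trans (norm_nonneg _) this
    have h3 := mul_nonneg h2 (by linarith : (0:ℝ) ≤ r₀/2)
    rwa [div_mul_cancel₀ _ (by linarith : (r₀:ℝ)/2 ≠ 0)] at h3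
  have hC₁0 : 0 ≤ C₁ := by
    have := hray R₁ (Real.pi/2 - δ/2) le_rfl (Or.inl rfl)
    have h2 := le_trans (norm_nonneg _) this
    have h3 := mul_nonneg h2 (by positivity : (0:ℝ) ≤ R₁^2)
    rwa [div_mul_cancel₀ _ (by positivity : (R₁:ℝ)^2 ≠ 0)] at h3
  -- bound on g for small ρ
  have hsmall : ∀ ρ θ : ℝ, 0 < ρ → ρ ≤ r₀ →
      θ ∈ Set.Icc (Real.pi/2 - δ/2) (Real.pi/2 + δ/2) →
      ‖g ((ρ:ℂ) * Complex.exp ((θ:ℂ) * Complex.I))‖ ≤ C₂*r₀ + r₀^3 + |a|/2*r₀ := by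
    intro ρ θ hρ hρr₀ hθ
    set z : ℂ := (ρ:ℂ) * Complex.exp ((θ:ℂ) * Complex.I) with hzdef
    have hzn : ‖z‖ = ρ := polar_norm ρ θ hρ.le
    have hfz : ‖f z‖ ≤ C₂ / ρ := by
      have := h00 z (by rw [hzdef, polar_arg ρ θ hρ (hang θ hθ).2.2]; exact hθ)
        (by rw [hzn]; exact hρr₀)
      rwa [hzn] at this
    have h1 : ‖g z‖ ≤ ‖z^2 * f z‖ + ‖z^3‖ + ‖((a:ℂ)/2) * z‖ := by
      calc ‖g z‖ = ‖z^2 * f z - z^3 + ((a:ℂ)/2) * z‖ := rfl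
      _ ≤ ‖z^2 * f z - z^3‖ + ‖((a:ℂ)/2) * z‖ := norm_add_le _ _
      _ ≤ ‖z^2 * f z‖ + ‖z^3‖ + ‖((a:ℂ)/2) * z‖ := by linarith [norm_sub_le (z^2 * f z) (z^3)]
    have h2 : ‖z^2 * f z‖ ≤ C₂ * ρ := by
      rw [norm_mul, norm_pow, hzn]
      calc ρ^2 * ‖f z‖ ≤ ρ^2 * (C₂/ρ) := by
            exact mul_le_mul_of_nonneg_left hfz (by positivity)
      _ = C₂ * ρ := by field_simp
    have h3 : ‖z^3‖ = ρ^3 := by rw [norm_pow, hzn]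
    have h4 : ‖((a:ℂ)/2) * z‖ = |a|/2 * ρ := by
      rw [norm_mul, hzn, norm_div]
      simp [Complex.norm_real]
    have hmono1 : C₂ * ρ ≤ C₂ * r₀ := mul_le_mul_of_nonneg_left hρr₀ hC₂0
    have hmono2 : ρ^3 ≤ r₀^3 := pow_le_pow_left₀ hρ.le hρr₀ 3
    have hmono3 : |a|/2 * ρ ≤ |a|/2 * r₀ :=
      mul_le_mul_of_nonneg_left hρr₀ (by positivity)
    linarith
  -- R₃ : big radius
  set R₃ : ℝ := max (max R₁ r₀) 1 with hR₃def
  have hR₃R₁ : R₁ ≤ R₃ := le_trans (le_max_left _ _) (le_max_left _ _)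
  have hR₃r₀ : r₀ ≤ R₃ := le_trans (le_max_right _ _) (le_max_left _ _)
  have hR₃1 : (1:ℝ) ≤ R₃ := le_max_right _ _
  have hR₃0 : 0 < R₃ := lt_of_lt_of_le one_pos hR₃1
  -- bound on g along the rays for large ρ
  have hbigray : ∀ ρ θ : ℝ, R₁ ≤ ρ →
      (θ = Real.pi / 2 - δ / 2 ∨ θ = Real.pi / 2 + δ / 2) →
      ‖g ((ρ:ℂ) * Complex.exp ((θ:ℂ) * Complex.I))‖ ≤ C₁ := by
    intro ρ θ hρ hθ
    have hρ0 : 0 < ρ := lt_of_lt_of_le hR₁ hρ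
    set z : ℂ := (ρ:ℂ) * Complex.exp ((θ:ℂ) * Complex.I) with hzdef
    have hzn : ‖z‖ = ρ := polar_norm ρ θ hρ0.le
    have hz0 : z ≠ 0 := by
      intro h; rw [h] at hzn; simp at hzn; linarith
    have hb := hray ρ θ hρ hθ
    rw [hg_eq z hz0, norm_mul, norm_pow, hzn]
    calc ρ^2 * ‖f z - z + (a:ℂ)/(2*z)‖ ≤ ρ^2 * (C₁/ρ^2) :=
          mul_le_mul_of_nonneg_left hb (by positivity)
    _ = C₁ := by field_simp
  -- compact middle annulus bound
  set K : Set ℂ := (fun p : ℝ × ℝ => ((p.1:ℂ) * Complex.exp ((p.2:ℂ) * Complex.I))) ''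
    (Set.Icc r₀ R₃ ×ˢ Set.Icc (Real.pi/2 - δ/2) (Real.pi/2 + δ/2)) with hKdef
  have hKcomp : IsCompact K := by
    apply IsCompact.image (isCompact_Icc.prod isCompact_Icc)
    fun_prop
  have hKsub : K ⊆ {z : ℂ | 0 < z.im} := by
    rintro x ⟨⟨ρ, θ⟩, ⟨⟨hρ1, _⟩, hθ⟩, rfl⟩
    simp only [Set.mem_setOf_eq]
    rw [polar_im]
    have := hang θ hθ
    exact mul_pos (lt_of_lt_of_le hr₀ hρ1) (Real.sin_pos_of_pos_of_lt_pi this.1 this.2.1)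
  obtain ⟨M₁, hM₁⟩ : ∃ M₁, ∀ x ∈ K, ‖g x‖ ≤ M₁ :=
    hKcomp.exists_bound_of_continuousOn (hgdiff.continuousOn.mono hKsub)
  have hmid : ∀ ρ θ : ℝ, r₀ ≤ ρ → ρ ≤ R₃ →
      θ ∈ Set.Icc (Real.pi/2 - δ/2) (Real.pi/2 + δ/2) →
      ‖g ((ρ:ℂ) * Complex.exp ((θ:ℂ) * Complex.I))‖ ≤ M₁ := by
    intro ρ θ h1 h2 hθ
    exact hM₁ _ ⟨(ρ, θ), ⟨⟨h1, h2⟩, hθ⟩, rfl⟩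
  -- combined ray bound
  set M₀ : ℝ := C₂*r₀ + r₀^3 + |a|/2*r₀ with hM₀def
  set Cray : ℝ := max (max C₁ M₀) M₁ with hCraydef
  have hCray0 : 0 ≤ Cray := le_trans hC₁0 (le_trans (le_max_left _ _) (le_max_left _ _))
  have hGray : ∀ ρ θ : ℝ, 0 < ρ →
      (θ = Real.pi / 2 - δ / 2 ∨ θ = Real.pi / 2 + δ / 2) →
      ‖g ((ρ:ℂ) * Complex.exp ((θ:ℂ) * Complex.I))‖ ≤ Cray := by
    intro ρ θ hρ hθ
    have hθIcc : θ ∈ Set.Icc (Real.pi/2 - δ/2) (Real.pi/2 + δ/2) := by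
      rcases hθ with h | h <;> rw [h] <;> constructor <;> linarith
    rcases le_or_gt ρ r₀ with h1 | h1
    · exact le_trans (hsmall ρ θ hρ h1 hθIcc)
        (le_trans (le_max_right _ _) (le_max_left _ _))
    rcases le_or_gt ρ R₃ with h2 | h2
    · exact le_trans (hmid ρ θ h1.le h2 hθIcc) (le_max_right _ _)
    · exact le_trans (hbigray ρ θ (le_trans hR₃R₁ h2.le) hθ)
        (le_trans (le_max_left _ _) (le_max_left _ _))
  -- Herglotz growth estimate in the sector
  have hfgrow : ∀ ρ θ : ℝ, R₃ ≤ ρ →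
      θ ∈ Set.Icc (Real.pi/2 - δ/2) (Real.pi/2 + δ/2) →
      ‖f ((ρ:ℂ) * Complex.exp ((θ:ℂ) * Complex.I))‖ ≤ 500*(ρ + |a| + C₁ + 2) := by
    intro ρ θ hρ hθ
    have hρ1 : (1:ℝ) ≤ ρ := le_trans hR₃1 hρ
    have hρ0 : (0:ℝ) < ρ := lt_of_lt_of_le one_pos hρ1
    set h : ℂ → ℂ := fun z => -Complex.I * f z with hhdef
    have hhd : DifferentiableOn ℂ h {z : ℂ | 0 < z.im} := hf.const_mul _
    have hhre : ∀ z : ℂ, 0 < z.im → 0 ≤ (h z).re := by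
      intro z hz
      simp only [hhdef, Complex.mul_re, Complex.neg_re, Complex.neg_im, Complex.I_re,
        Complex.I_im]
      have := hherg z hz
      simp only [neg_zero, zero_mul, neg_mul, one_mul]
      linarith
    have hhn : ∀ x : ℂ, ‖h x‖ = ‖f x‖ := by
      intro x; rw [hhdef]; simp only; rw [norm_mul, norm_neg, Complex.norm_I, one_mul]
    have hchain := sector_chain h hhd hhre δ ρ θ ⟨hδ0, hδπ⟩ hρ0 hθ
    rw [hhn, hhn] at hchain
    -- value at the ray
    set w : ℂ := (ρ:ℂ) * Complex.exp ((↑(Real.pi/2 - δ/2):ℂ) * Complex.I) with hwdef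
    have hwn : ‖w‖ = ρ := polar_norm _ _ hρ0.le
    have hw0 : w ≠ 0 := by intro h'; rw [h'] at hwn; simp at hwn; linarith
    have hrayv := hray ρ (Real.pi/2 - δ/2) (le_trans hR₃R₁ hρ) (Or.inl rfl)
    have hrayv' : ‖f w - w + (a:ℂ)/(2*w)‖ ≤ C₁ := by
      refine le_trans hrayv ?_
      apply div_le_self hC₁0
      nlinarith
    have haw : ‖(a:ℂ)/(2*w)‖ ≤ |a| := by
      have h2n : ‖(2:ℂ) * w‖ = 2 * ρ := by
        rw [norm_mul, hwn]; norm_num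
      rw [norm_div, h2n, Complex.norm_real, Real.norm_eq_abs]
      exact div_le_self (abs_nonneg a) (by linarith)
    have hfw : ‖f w‖ ≤ C₁ + ρ + |a| := by
      have : f w = (f w - w + (a:ℂ)/(2*w)) + w - (a:ℂ)/(2*w) := by ring
      rw [this]
      calc ‖f w - w + (a:ℂ)/(2*w) + w - (a:ℂ)/(2*w)‖
          ≤ ‖f w - w + (a:ℂ)/(2*w) + w‖ + ‖(a:ℂ)/(2*w)‖ := norm_sub_le _ _
      _ ≤ ‖f w - w + (a:ℂ)/(2*w)‖ + ‖w‖ + ‖(a:ℂ)/(2*w)‖ := by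
            linarith [norm_add_le (f w - w + (a:ℂ)/(2*w)) w]
      _ ≤ C₁ + ρ + |a| := by rw [hwn]; linarith
    calc ‖f ((ρ:ℂ) * Complex.exp ((θ:ℂ) * Complex.I))‖
        ≤ 500 * (‖f w‖ + 2) := hchain
    _ ≤ 500*(ρ + |a| + C₁ + 2) := by linarith
  -- growth of g for large ρ
  set A₁ : ℝ := 500*(3 + |a| + C₁) + 1 + |a| with hA₁def
  have hA₁0 : 0 < A₁ := by
    have := abs_nonneg a
    simp only [hA₁def]; nlinarith
  have hggrow : ∀ ρ θ : ℝ, R₃ ≤ ρ →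
      θ ∈ Set.Icc (Real.pi/2 - δ/2) (Real.pi/2 + δ/2) →
      ‖g ((ρ:ℂ) * Complex.exp ((θ:ℂ) * Complex.I))‖ ≤ A₁ * ρ^3 := by
    intro ρ θ hρ hθ
    have hρ1 : (1:ℝ) ≤ ρ := le_trans hR₃1 hρ
    have hρ0 : (0:ℝ) < ρ := lt_of_lt_of_le one_pos hρ1
    set z : ℂ := (ρ:ℂ) * Complex.exp ((θ:ℂ) * Complex.I) with hzdef
    have hzn : ‖z‖ = ρ := polar_norm ρ θ hρ0.le
    have hfz := hfgrow ρ θ hρ hθ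
    have h1 : ‖g z‖ ≤ ‖z^2 * f z‖ + ‖z^3‖ + ‖((a:ℂ)/2) * z‖ := by
      calc ‖g z‖ = ‖z^2 * f z - z^3 + ((a:ℂ)/2) * z‖ := rfl
      _ ≤ ‖z^2 * f z - z^3‖ + ‖((a:ℂ)/2) * z‖ := norm_add_le _ _
      _ ≤ ‖z^2 * f z‖ + ‖z^3‖ + ‖((a:ℂ)/2) * z‖ := by linarith [norm_sub_le (z^2 * f z) (z^3)]
    have h2 : ‖z^2 * f z‖ ≤ ρ^2 * (500*(ρ + |a| + C₁ + 2)) := by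
      rw [norm_mul, norm_pow, hzn]
      exact mul_le_mul_of_nonneg_left hfz (by positivity)
    have h3 : ‖z^3‖ = ρ^3 := by rw [norm_pow, hzn]
    have h4 : ‖((a:ℂ)/2) * z‖ = |a|/2 * ρ := by
      rw [norm_mul, hzn, norm_div]
      simp [Complex.norm_real]
    have e2 : ρ^2 * (500*(ρ + |a| + C₁ + 2)) = 500*ρ^3 + 500*(|a| + C₁ + 2)*ρ^2 := by ring
    have e3 : ρ^2 ≤ ρ^3 := by nlinarith
    have e4 : ρ ≤ ρ^3 := by nlinarith
    have e5 : 500*(|a| + C₁ + 2)*ρ^2 ≤ 500*(|a| + C₁ + 2)*ρ^3 := by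
      apply mul_le_mul_of_nonneg_left e3
      have := abs_nonneg a; nlinarith
    have e6 : |a|/2 * ρ ≤ |a| * ρ^3 := by
      have h7 : |a|/2 * ρ ≤ |a|/2 * ρ^3 := mul_le_mul_of_nonneg_left e4 (by positivity)
      have h8 : |a|/2 * ρ^3 ≤ |a| * ρ^3 := by
        apply mul_le_mul_of_nonneg_right _ (by positivity)
        linarith [abs_nonneg a]
      linarith
    have : A₁ * ρ^3 = 500*(3 + |a| + C₁)*ρ^3 + ρ^3 + |a| * ρ^3 := by rw [hA₁def]; ring
    rw [this]
    have e7 : 500*ρ^3 + 500*(|a| + C₁ + 2)*ρ^3 ≤ 500*(3 + |a| + C₁)*ρ^3 := by nlinarith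
    linarith
  -- global growth of g in the sector
  set A : ℝ := max (max A₁ (max M₀ M₁)) 1 with hAdef
  have hA1 : (1:ℝ) ≤ A := le_max_right _ _
  have hA0 : (0:ℝ) < A := lt_of_lt_of_le one_pos hA1
  have hAA₁ : A₁ ≤ A := le_trans (le_max_left _ _) (le_max_left _ _)
  have hAM₀ : M₀ ≤ A := le_trans (le_trans (le_max_left _ _) (le_max_right _ _)) (le_max_left _ _)
  have hAM₁ : M₁ ≤ A := le_trans (le_trans (le_max_right _ _) (le_max_right _ _)) (le_max_left _ _)
  have hgrow : ∀ ρ θ : ℝ, 0 < ρ →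
      θ ∈ Set.Icc (Real.pi/2 - δ/2) (Real.pi/2 + δ/2) →
      ‖g ((ρ:ℂ) * Complex.exp ((θ:ℂ) * Complex.I))‖ ≤ A * (ρ^3 + 1) := by
    intro ρ θ hρ hθ
    have hcube : (0:ℝ) ≤ ρ^3 := by positivity
    have hstep : A ≤ A * (ρ^3 + 1) := by nlinarith
    rcases le_or_gt ρ r₀ with h1 | h1
    · exact le_trans (hsmall ρ θ hρ h1 hθ) (le_trans hAM₀ hstep)
    rcases le_or_gt ρ R₃ with h2 | h2
    · exact le_trans (hmid ρ θ h1.le h2 hθ) (le_trans hAM₁ hstep)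
    · refine le_trans (hggrow ρ θ h2.le hθ) ?_
      have : A₁ * ρ^3 ≤ A * ρ^3 := mul_le_mul_of_nonneg_right hAA₁ hcube
      nlinarith
  -- Phragmén–Lindelöf on the strip
  have h1exp : Complex.exp ((↑(Real.pi/2):ℂ) * Complex.I) = Complex.I := by
    rw [Complex.exp_mul_I, ← Complex.ofReal_cos, ← Complex.ofReal_sin,
      Real.cos_pi_div_two, Real.sin_pi_div_two]
    simp
  set B : ℝ := Real.log (2*A) + 3 with hBdef
  have hlogA : 0 ≤ Real.log (2*A) := Real.log_nonneg (by linarith)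
  have hstrip : ∀ w : ℂ, -(δ/2) ≤ w.im → w.im ≤ δ/2 →
      ‖g (Complex.I * Complex.exp w)‖ ≤ Cray := by
    intro w hw1 hw2
    refine PhragmenLindelof.horizontal_strip (a := -(δ/2)) (b := δ/2) (C := Cray)
      (f := fun w => g (Complex.I * Complex.exp w)) (z := w) ?_ ?_ ?_ ?_ hw1 hw2
    · -- DiffContOnCl
      have hGdiff : DifferentiableOn ℂ (fun w => g (Complex.I * Complex.exp w))
          (Complex.im ⁻¹' Set.Ioo (-(Real.pi/2)) (Real.pi/2)) := by
        apply DifferentiableOn.comp hgdiff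
        · exact ((differentiable_const _).mul Complex.differentiable_exp).differentiableOn
        · intro w hw
          simp only [Set.mem_preimage, Set.mem_setOf_eq] at hw ⊢
          have him : (Complex.I * Complex.exp w).im = (Complex.exp w).re := by
            rw [Complex.mul_im, Complex.I_re, Complex.I_im]; ring
          rw [him, Complex.exp_re]
          exact mul_pos (Real.exp_pos _) (Real.cos_pos_of_mem_Ioo hw)
      apply DifferentiableOn.diffContOnCl
      apply hGdiff.mono
      refine subset_trans (continuous_im.closure_preimage_subset _) ?_
      rw [closure_Ioo (by linarith : -(δ/2) ≠ δ/2)]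
      intro w hw
      simp only [Set.mem_preimage, Set.mem_Icc] at hw
      simp only [Set.mem_preimage, Set.mem_Ioo]
      constructor <;> [linarith [hw.1]; linarith [hw.2]]
    · -- growth condition
      refine ⟨2, ?_, B, ?_⟩
      · rw [show δ/2 - -(δ/2) = δ by ring, lt_div_iff₀ hδ0]
        linarith
      · rw [Asymptotics.isBigO_iff]
        refine ⟨1, ?_⟩
        rw [Filter.eventually_inf_principal]
        apply Filter.Eventually.of_forall
        intro w hw
        simp only [Set.mem_preimage, Set.mem_Ioo] at hw
        have hmem : Real.pi/2 + w.im ∈ Set.Icc (Real.pi/2 - δ/2) (Real.pi/2 + δ/2) :=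
          ⟨by linarith [hw.1], by linarith [hw.2]⟩
        have hGb : ‖g (Complex.I * Complex.exp w)‖ ≤ A * ((Real.exp w.re)^3 + 1) := by
          rw [i_exp_eq w]
          exact hgrow _ _ (Real.exp_pos _) hmem
        have hx := abs_nonneg w.re
        set x : ℝ := w.re with hxdef
        have ht1 : (1:ℝ) ≤ Real.exp (2*|x|) := Real.one_le_exp (by positivity)
        have ht2 : 2*|x| + 1 ≤ Real.exp (2*|x|) := Real.add_one_le_exp _
        have hb1 : (Real.exp x)^3 + 1 ≤ 2 * Real.exp (3*|x|) := by
          have h1 : (Real.exp x)^3 = Real.exp (3*x) := by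
            rw [← Real.exp_nat_mul]; norm_num
          have h2 : Real.exp (3*x) ≤ Real.exp (3*|x|) :=
            Real.exp_le_exp.mpr (by nlinarith [le_abs_self x])
          have h3 : (1:ℝ) ≤ Real.exp (3*|x|) := Real.one_le_exp (by positivity)
          rw [h1]; linarith
        have hb2 : A * ((Real.exp x)^3 + 1) ≤ Real.exp (Real.log (2*A) + 3*|x|) := by
          rw [Real.exp_add, Real.exp_log (by linarith : (0:ℝ) < 2*A)]
          calc A * ((Real.exp x)^3 + 1) ≤ A * (2 * Real.exp (3*|x|)) :=
                mul_le_mul_of_nonneg_left hb1 hA0.le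
          _ = 2*A * Real.exp (3*|x|) := by ring
        have hb3 : Real.log (2*A) + 3*|x| ≤ B * Real.exp (2*|x|) := by
          rw [hBdef]
          nlinarith
        have hb4 : Real.exp (Real.log (2*A) + 3*|x|) ≤ Real.exp (B * Real.exp (2*|x|)) :=
          Real.exp_le_exp.mpr hb3
        have hnorm : ‖Real.exp (B * Real.exp (2*|x|))‖ = Real.exp (B * Real.exp (2*|x|)) := by
          rw [Real.norm_eq_abs, abs_of_pos (Real.exp_pos _)]
        rw [one_mul, hnorm]
        exact le_trans hGb (le_trans hb2 hb4)
    · -- lower boundary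
      intro w hwim
      show ‖g (Complex.I * Complex.exp w)‖ ≤ Cray
      rw [i_exp_eq w]
      exact hGray _ _ (Real.exp_pos _) (Or.inl (by rw [hwim]; ring))
    · -- upper boundary
      intro w hwim
      show ‖g (Complex.I * Complex.exp w)‖ ≤ Cray
      rw [i_exp_eq w]
      exact hGray _ _ (Real.exp_pos _) (Or.inr (by rw [hwim]))
  -- conclusion
  refine ⟨Cray, 1, one_pos, ?_⟩
  intro z hargz hnorm
  have hz0 : z ≠ 0 := by
    intro h; rw [h] at hnorm; simp at hnorm; linarith
  set w : ℂ := Complex.log z - (↑(Real.pi/2):ℂ) * Complex.I with hwdef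
  have hwim : w.im = Complex.arg z - Real.pi/2 := by
    rw [hwdef, Complex.sub_im, Complex.log_im, Complex.mul_im]
    simp
  have hiw : Complex.I * Complex.exp w = z := by
    rw [hwdef, Complex.exp_sub, Complex.exp_log hz0, h1exp, mul_comm,
      div_mul_cancel₀ _ Complex.I_ne_zero]
  have hPL := hstrip w (by rw [hwim]; linarith [hargz.1]) (by rw [hwim]; linarith [hargz.2])
  rw [hiw] at hPL
  rw [hgnorm z hz0]
  have hzpos : (0:ℝ) < ‖z‖^2 := by
    have : (0:ℝ) < ‖z‖ := norm_pos_iff.mpr hz0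
    positivity
  gcongr
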